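/- Let g : ℝ² → ℝ, g(x₁,x₂) = x₁² − x₂, with feasible set S = {x ∈ ℝ² : x₁² − x₂ ≤ 0}, x̄ = (0,0) and d = (0,0). Then (1,z₂) ∈ A(x̄,d) for every z₂ > 0, while (1,0) ∉ A(x̄,d); consequently the set A(x̄,d) is not closed. -/

import Mathlib

open Set Filter Topology

noncomputable section

/-- The set `A(x,d)` for the constraints `g`. -/
def setA {s : ℕ} (m : ℕ) (g : Fin m → (Fin s → ℝ) → ℝ) (x d : Fin s → ℝ) :
    Set (Fin s → ℝ) :=
  {z | ∀ i, g i x = 0 → fderiv ℝ (g i) x d = 0 →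
    ∃ δ > 0, ∀ t ∈ Ioo (0 : ℝ) δ, g i (x + t • d + (t ^ 2 / 2) • z) ≤ 0}

lemma mem_pos (z₂ : ℝ) (hz : 0 < z₂) :
    ![1, z₂] ∈ setA 1 (fun _ (x : Fin 2 → ℝ) => (x 0) ^ 2 - x 1) 0 0 := by
  intro i _ _
  refine ⟨Real.sqrt (2 * z₂), Real.sqrt_pos.mpr (by linarith), ?_⟩
  intro t ⟨ht0, htδ⟩
  have ht2 : t ^ 2 < 2 * z₂ := by
    have := Real.sq_sqrt (by linarith : (0:ℝ) ≤ 2 * z₂)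
    nlinarith
  simp only [Pi.add_apply, Pi.smul_apply, Pi.zero_apply, smul_eq_mul,
    Matrix.cons_val_zero, Matrix.cons_val_one, Matrix.head_cons]
  nlinarith [sq_nonneg t]

/-- for the single constraint `g(x₁,x₂) = x₁² − x₂`, `x̄ = (0,0)`, `d = (0,0)`:
`(1,z₂) ∈ A(x̄,d)` for every `z₂ > 0`, while `(1,0) ∉ A(x̄,d)`; consequently `A(x̄,d)`
is not closed. -/
theorem statement4 :
    (∀ z₂ : ℝ, 0 < z₂ →
      ![1, z₂] ∈ setA 1 (fun _ (x : Fin 2 → ℝ) => (x 0) ^ 2 - x 1) 0 0) ∧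
    ![1, 0] ∉ setA 1 (fun _ (x : Fin 2 → ℝ) => (x 0) ^ 2 - x 1) 0 0 ∧
    ¬ IsClosed (setA 1 (fun _ (x : Fin 2 → ℝ) => (x 0) ^ 2 - x 1) 0 0) := by
  have hnot : ![1, 0] ∉ setA 1 (fun _ (x : Fin 2 → ℝ) => (x 0) ^ 2 - x 1) 0 0 := by
    intro h
    obtain ⟨δ, hδ, H⟩ := h 0 (by simp) (by simp)
    have := H (δ / 2) ⟨by linarith, by linarith⟩
    simp only [Pi.add_apply, Pi.smul_apply, Pi.zero_apply, smul_eq_mul,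
      Matrix.cons_val_zero, Matrix.cons_val_one, Matrix.head_cons] at this
    nlinarith [pow_pos hδ 4]
  refine ⟨mem_pos, hnot, ?_⟩
  intro hcl
  apply hnot
  have htend : Tendsto (fun n : ℕ => (![1, 1 / (n + 1)] : Fin 2 → ℝ)) atTop
      (𝓝 ![1, 0]) := by
    rw [tendsto_pi_nhds]
    intro i
    fin_cases i
    · simp
    · simpa using tendsto_one_div_add_atTop_nhds_zero_nat (𝕜 := ℝ)
  exact hcl.mem_of_tendsto htend
    (Eventually.of_forall fun n => mem_pos (1 / (n + 1)) (by positivity))
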